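/- The matrix exponential maps 𝕋_n(ℂ) onto 𝕋_n^*(ℂ): exp(𝕋_n(ℂ)) = 𝕋_n^*(ℂ). -/

import Mathlib

open NormedSpace

/-- `A` is lower triangular with all diagonal entries equal (the set `𝕋_n(K)`). -/
def LowerTriConstDiag {K : Type*} [Semiring K] {n : ℕ}
    (A : Matrix (Fin n) (Fin n) K) : Prop :=
  (∀ i j : Fin n, i < j → A i j = 0) ∧ ∀ i j : Fin n, A i i = A j j

namespace ExpTriAux

open Polynomial Finset Matrix

variable {n : ℕ}

/-- Strictly lower triangular. -/
def SL (A : Matrix (Fin n) (Fin n) ℂ) : Prop := ∀ i j : Fin n, i ≤ j → A i j = 0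

theorem SL.pow_entry {A : Matrix (Fin n) (Fin n) ℂ} (hA : SL A) :
    ∀ m (i j : Fin n), (i : ℕ) < (j : ℕ) + m → (A ^ m) i j = 0 := by
  intro m
  induction m with
  | zero =>
    intro i j h
    simp only [Nat.add_zero] at h
    rw [pow_zero]
    exact Matrix.one_apply_ne (fun hij => by rw [hij] at h; omega)
  | succ m ih =>
    intro i j h
    rw [pow_succ, Matrix.mul_apply]
    apply Finset.sum_eq_zero
    intro k _
    by_cases hk : k ≤ j
    · rw [hA k j hk, mul_zero]
    · have : (j : ℕ) < (k : ℕ) := by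
        rw [Fin.le_def, not_le] at hk; exact hk
      rw [ih i k (by omega), zero_mul]

theorem SL.pow_eq_zero {A : Matrix (Fin n) (Fin n) ℂ} (hA : SL A) : A ^ n = 0 := by
  ext i j
  rw [hA.pow_entry n i j (lt_of_lt_of_le i.isLt (Nat.le_add_left _ _)), Matrix.zero_apply]

theorem SL.pow_succ' {A : Matrix (Fin n) (Fin n) ℂ} (hA : SL A) (m : ℕ) : SL (A ^ (m + 1)) :=
  fun i j hij => hA.pow_entry (m + 1) i j (by have := Fin.le_def.mp hij; omega)

theorem SL.smul {A : Matrix (Fin n) (Fin n) ℂ} (hA : SL A) (c : ℂ) : SL (c • A) :=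
  fun i j hij => by rw [Matrix.smul_apply, hA i j hij, smul_zero]

theorem SL.sum {ι : Type*} {s : Finset ι} {f : ι → Matrix (Fin n) (Fin n) ℂ}
    (h : ∀ i ∈ s, SL (f i)) : SL (∑ i ∈ s, f i) := fun i j hij => by
  rw [Matrix.sum_apply]
  exact Finset.sum_eq_zero fun k hk => h k hk i j hij

theorem exp_eq_sum_of_pow_eq_zero {A : Matrix (Fin n) (Fin n) ℂ} {m : ℕ} (h : A ^ m = 0) :
    exp A = ∑ j ∈ Finset.range (m + 1), ((j.factorial : ℂ))⁻¹ • A ^ j := by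
  rw [exp_eq_tsum (𝕂 := ℂ)]
  refine tsum_eq_sum ?_
  intro b hb
  have hbm : m ≤ b := by
    simp only [Finset.mem_range, not_lt] at hb; omega
  rw [pow_eq_zero_of_le hbm h, smul_zero]

/-- The truncated logarithm series `∑_{k<M} (-1)^k/(k+1) X^(k+1)`. -/
noncomputable def Lp (M : ℕ) : ℂ[X] :=
  ∑ k ∈ Finset.range M, C ((-1 : ℂ) ^ k * ((k : ℂ) + 1)⁻¹) * X ^ (k + 1)

/-- The truncated exponential of `Lp`. -/
noncomputable def Ep (M : ℕ) : ℂ[X] :=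
  ∑ j ∈ Finset.range (M + 1), C ((j.factorial : ℂ))⁻¹ * (Lp M) ^ j

theorem X_dvd_Lp {M : ℕ} : (X : ℂ[X]) ∣ Lp M :=
  Finset.dvd_sum fun k _ => ((dvd_pow_self X (Nat.succ_ne_zero k)).mul_left _)

theorem deriv_Lp (M : ℕ) : derivative (Lp M) = ∑ k ∈ Finset.range M, (-X : ℂ[X]) ^ k := by
  rw [Lp, derivative_sum]
  refine Finset.sum_congr rfl fun k _ => ?_
  rw [derivative_C_mul_X_pow]
  have h1 : ((k : ℂ) + 1) ≠ 0 := Nat.cast_add_one_ne_zero k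
  have h2 : ((-1 : ℂ) ^ k * ((k : ℂ) + 1)⁻¹) * ((k + 1 : ℕ) : ℂ) = (-1 : ℂ) ^ k := by
    push_cast
    field_simp
  rw [h2, Nat.add_sub_cancel, neg_pow (X : ℂ[X]) k, ← C_1, ← C_neg, ← C_pow]

theorem one_add_X_mul_deriv (M : ℕ) :
    (1 + X) * derivative (Lp M) = 1 - (-X : ℂ[X]) ^ M := by
  rw [deriv_Lp]
  linear_combination (-1 : ℂ[X]) * geom_sum_mul (-X : ℂ[X]) M

theorem deriv_Ep (M : ℕ) :
    derivative (Ep M) =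
      derivative (Lp M) * ∑ j ∈ Finset.range M, C ((j.factorial : ℂ))⁻¹ * (Lp M) ^ j := by
  rw [Ep, derivative_sum, Finset.sum_range_succ', Finset.mul_sum]
  have h0 : derivative (C ((Nat.factorial 0 : ℂ))⁻¹ * (Lp M) ^ 0) = 0 := by
    simp
  rw [h0, add_zero]
  refine Finset.sum_congr rfl fun j _ => ?_
  rw [derivative_C_mul, derivative_pow]
  have h1 : ((j + 1).factorial : ℂ)⁻¹ * ((j + 1 : ℕ) : ℂ) = ((j.factorial : ℂ))⁻¹ := by
    have : ((j + 1).factorial : ℂ) = ((j + 1 : ℕ) : ℂ) * (j.factorial : ℂ) := by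
      rw [Nat.factorial_succ]; push_cast; ring
    have hj1 : ((j + 1 : ℕ) : ℂ) ≠ 0 := by push_cast; exact Nat.cast_add_one_ne_zero j
    have hjf : ((j.factorial : ℂ)) ≠ 0 := by
      exact_mod_cast Nat.cast_ne_zero.mpr (Nat.factorial_ne_zero j)
    rw [this, mul_inv, mul_comm (((j + 1 : ℕ) : ℂ))⁻¹, mul_assoc, inv_mul_cancel₀ hj1, mul_one]
  have h2 : (C (((j + 1).factorial : ℂ))⁻¹) * (C ((j + 1 : ℕ) : ℂ)) = C ((j.factorial : ℂ))⁻¹ := by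
    rw [← C_mul, h1]
  calc C (((j + 1).factorial : ℂ))⁻¹ * (C ((j + 1 : ℕ) : ℂ) * Lp M ^ (j + 1 - 1) * derivative (Lp M))
      = (C (((j + 1).factorial : ℂ))⁻¹ * C ((j + 1 : ℕ) : ℂ)) * Lp M ^ j * derivative (Lp M) := by
        rw [Nat.add_sub_cancel]; ring
    _ = derivative (Lp M) * (C ((j.factorial : ℂ))⁻¹ * Lp M ^ j) := by rw [h2]; ring

theorem key_dvd (M : ℕ) : (X : ℂ[X]) ^ M ∣ (1 + X) * derivative (Ep M) - Ep M := by
  set Q : ℂ[X] := ∑ j ∈ Finset.range M, C ((j.factorial : ℂ))⁻¹ * (Lp M) ^ j with hQ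
  have h1 : Ep M = Q + C ((M.factorial : ℂ))⁻¹ * (Lp M) ^ M := by
    rw [Ep, Finset.sum_range_succ]
  have e1 : (1 + X) * derivative (Ep M) - Ep M =
      -((-X : ℂ[X]) ^ M * Q) - C ((M.factorial : ℂ))⁻¹ * (Lp M) ^ M := by
    rw [deriv_Ep, ← hQ]
    linear_combination Q * one_add_X_mul_deriv M - h1
  rw [e1]
  apply dvd_sub
  · rw [dvd_neg]
    exact Dvd.dvd.mul_right (by rw [neg_pow]; exact Dvd.intro_left _ rfl) Q
  · exact (pow_dvd_pow_of_dvd X_dvd_Lp M).mul_left _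

theorem dvd_of_deriv {F : ℂ[X]} {M : ℕ} (h0 : X ∣ F)
    (h1 : (X : ℂ[X]) ^ M ∣ (1 + X) * derivative F - F) : (X : ℂ[X]) ^ M ∣ F := by
  rw [Polynomial.X_pow_dvd_iff] at h1 ⊢
  have H : ∀ d, d < M → F.coeff d = 0 := by
    intro d
    induction d with
    | zero => intro _; exact Polynomial.X_dvd_iff.mp h0
    | succ d ih =>
      intro hd
      have hd' : d < M := by omega
      have ihd : F.coeff d = 0 := ih (by omega)
      have hc := h1 d hd'
      have hXF : (X * derivative F).coeff d = F.coeff d * (d : ℂ) := by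
        cases d with
        | zero => simp
        | succ e =>
          rw [Polynomial.coeff_X_mul, Polynomial.coeff_derivative]
          push_cast; ring
      rw [Polynomial.coeff_sub, add_mul, one_mul, Polynomial.coeff_add, hXF,
        Polynomial.coeff_derivative, ihd] at hc
      have hne : ((d : ℂ) + 1) ≠ 0 := Nat.cast_add_one_ne_zero d
      have : F.coeff (d + 1) * ((d : ℂ) + 1) = 0 := by
        linear_combination hc
      exact (mul_eq_zero.mp this).resolve_right hne
  exact H

theorem Ep_eq (M : ℕ) : ∃ G : ℂ[X], Ep M = 1 + X + X ^ M * G := by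
  have hc0 : (Ep M).coeff 0 = 1 := by
    rw [Polynomial.coeff_zero_eq_eval_zero, Ep, Polynomial.eval_finset_sum,
      Finset.sum_range_succ']
    obtain ⟨L2, hL2⟩ := X_dvd_Lp (M := M)
    have hL0 : (Lp M).eval 0 = 0 := by rw [hL2]; simp
    have : ∀ j ∈ Finset.range M,
        (C (((j + 1).factorial : ℂ))⁻¹ * Lp M ^ (j + 1)).eval 0 = 0 := by
      intro j _
      rw [Polynomial.eval_mul, Polynomial.eval_pow, hL0, zero_pow (Nat.succ_ne_zero j), mul_zero]
    rw [Finset.sum_congr rfl this]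
    simp
  set F : ℂ[X] := Ep M - (1 + X) with hF
  have h0 : X ∣ F := by
    rw [Polynomial.X_dvd_iff, hF, Polynomial.coeff_sub, hc0]
    simp
  have h1 : (X : ℂ[X]) ^ M ∣ (1 + X) * derivative F - F := by
    have e : (1 + X) * derivative F - F = (1 + X) * derivative (Ep M) - Ep M := by
      rw [hF]
      rw [derivative_sub, derivative_add, derivative_one, derivative_X]
      ring
    rw [e]
    exact key_dvd M
  obtain ⟨G, hG⟩ := dvd_of_deriv h0 h1
  exact ⟨G, by linear_combination hG⟩

theorem exp_aeval_Lp {N : Matrix (Fin n) (Fin n) ℂ} {M : ℕ} (hN : N ^ M = 0) :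
    exp (Polynomial.aeval N (Lp M)) = 1 + N := by
  set P := Polynomial.aeval N (Lp M) with hP
  have hPM : P ^ M = 0 := by
    obtain ⟨q, hq⟩ : (X : ℂ[X]) ^ M ∣ (Lp M) ^ M := pow_dvd_pow_of_dvd X_dvd_Lp M
    rw [hP, ← map_pow, hq, _root_.map_mul, map_pow, Polynomial.aeval_X, hN, zero_mul]
  rw [exp_eq_sum_of_pow_eq_zero hPM]
  have hE : Polynomial.aeval N (Ep M) =
      ∑ j ∈ Finset.range (M + 1), ((j.factorial : ℂ))⁻¹ • P ^ j := by
    rw [Ep, _root_.map_sum]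
    refine Finset.sum_congr rfl fun j _ => ?_
    rw [_root_.map_mul, map_pow, Polynomial.aeval_C, ← Algebra.smul_def]
  rw [← hE]
  obtain ⟨G, hG⟩ := Ep_eq M
  rw [hG, _root_.map_add, _root_.map_add, _root_.map_one, Polynomial.aeval_X, _root_.map_mul, map_pow,
    Polynomial.aeval_X, hN, zero_mul, add_zero]

theorem exp_smul_one (c : ℂ) :
    exp (c • (1 : Matrix (Fin n) (Fin n) ℂ)) = Complex.exp c • 1 := by
  rw [Matrix.smul_one_eq_diagonal, Matrix.exp_diagonal]
  have : exp (fun _ : Fin n => c) = fun _ : Fin n => Complex.exp c := by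
    funext i
    rw [Pi.coe_exp, ← Complex.exp_eq_exp_ℂ]
  rw [this, ← Matrix.smul_one_eq_diagonal]

end ExpTriAux

/-- Appendix (ii): `exp(𝕋_n(ℂ)) = 𝕋_n^*(ℂ)`, the lower triangular matrices with constant
nonzero diagonal. -/
theorem exp_image_lowerTri_complex (n : ℕ) :
    exp '' {A : Matrix (Fin n) (Fin n) ℂ | LowerTriConstDiag A} =
      {A : Matrix (Fin n) (Fin n) ℂ | LowerTriConstDiag A ∧ ∀ i, A i i ≠ 0} := by
  rcases Nat.eq_zero_or_pos n with hn | hn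
  · subst hn
    ext B
    simp only [Set.mem_image, Set.mem_setOf_eq]
    constructor
    · rintro ⟨A, _, rfl⟩
      exact ⟨⟨fun i => i.elim0, fun i => i.elim0⟩, fun i => i.elim0⟩
    · intro _
      refine ⟨B, ⟨fun i => i.elim0, fun i => i.elim0⟩, ?_⟩
      ext i j
      exact i.elim0
  · ext B
    simp only [Set.mem_image, Set.mem_setOf_eq]
    set i0 : Fin n := ⟨0, hn⟩
    constructor
    · rintro ⟨A, ⟨hlow, hdiag⟩, rfl⟩
      set μ := A i0 i0 with hμ
      set N := A - μ • 1 with hNdef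
      have hSL : ExpTriAux.SL N := by
        intro i j hij
        rcases eq_or_lt_of_le hij with rfl | h
        · rw [hNdef, Matrix.sub_apply, Matrix.smul_apply, Matrix.one_apply_eq, hdiag i i0,
            smul_eq_mul, mul_one, sub_self]
        · rw [hNdef, Matrix.sub_apply, Matrix.smul_apply, Matrix.one_apply_ne (ne_of_lt h),
            hlow i j h, smul_zero, sub_zero]
      have hA : A = μ • 1 + N := by rw [hNdef]; abel
      have hcomm : Commute (μ • (1 : Matrix (Fin n) (Fin n) ℂ)) N :=
        (Commute.one_left N).smul_left μ
      have hNn : N ^ n = 0 := hSL.pow_eq_zero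
      set S := ∑ j ∈ Finset.range n, (((j + 1).factorial : ℂ))⁻¹ • N ^ (j + 1) with hS
      have hexpN : exp N = 1 + S := by
        rw [ExpTriAux.exp_eq_sum_of_pow_eq_zero hNn, Finset.sum_range_succ', ← hS]
        rw [add_comm]
        norm_num
      have hSLS : ExpTriAux.SL S :=
        ExpTriAux.SL.sum fun j _ => (hSL.pow_succ' j).smul _
      have hexpA : exp A = Complex.exp μ • (1 + S) := by
        rw [hA, Matrix.exp_add_of_commute _ _ hcomm, ExpTriAux.exp_smul_one, hexpN,
          smul_mul_assoc, one_mul]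
      rw [hexpA]
      refine ⟨⟨?_, ?_⟩, ?_⟩
      · intro i j hij
        rw [Matrix.smul_apply, Matrix.add_apply, Matrix.one_apply_ne (ne_of_lt hij),
          hSLS i j (le_of_lt hij), add_zero, smul_zero]
      · intro i j
        rw [Matrix.smul_apply, Matrix.smul_apply, Matrix.add_apply, Matrix.add_apply,
          Matrix.one_apply_eq, Matrix.one_apply_eq, hSLS i i le_rfl, hSLS j j le_rfl]
      · intro i
        rw [Matrix.smul_apply, Matrix.add_apply, Matrix.one_apply_eq, hSLS i i le_rfl,
          add_zero, smul_eq_mul, mul_one]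
        exact Complex.exp_ne_zero μ
    · rintro ⟨⟨hlow, hdiag⟩, hne⟩
      set μ := B i0 i0 with hμ
      have hμ0 : μ ≠ 0 := hne i0
      set N := μ⁻¹ • B - 1 with hNdef
      have hSL : ExpTriAux.SL N := by
        intro i j hij
        rcases eq_or_lt_of_le hij with rfl | h
        · rw [hNdef, Matrix.sub_apply, Matrix.smul_apply, Matrix.one_apply_eq, hdiag i i0,
            smul_eq_mul, inv_mul_cancel₀ hμ0, sub_self]
        · rw [hNdef, Matrix.sub_apply, Matrix.smul_apply, Matrix.one_apply_ne (ne_of_lt h),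
            hlow i j h, smul_zero, sub_zero]
      have hNn : N ^ n = 0 := hSL.pow_eq_zero
      set Q := Polynomial.aeval N (ExpTriAux.Lp n) with hQdef
      have hSLQ : ExpTriAux.SL Q := by
        rw [hQdef, ExpTriAux.Lp, _root_.map_sum]
        refine ExpTriAux.SL.sum fun k _ => ?_
        rw [_root_.map_mul, map_pow, Polynomial.aeval_C, Polynomial.aeval_X, ← Algebra.smul_def]
        exact (hSL.pow_succ' k).smul _
      refine ⟨Complex.log μ • 1 + Q, ⟨?_, ?_⟩, ?_⟩
      · intro i j hij
        rw [Matrix.add_apply, Matrix.smul_apply, Matrix.one_apply_ne (ne_of_lt hij),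
          hSLQ i j (le_of_lt hij), smul_zero, add_zero]
      · intro i j
        rw [Matrix.add_apply, Matrix.add_apply, Matrix.smul_apply, Matrix.smul_apply,
          Matrix.one_apply_eq, Matrix.one_apply_eq, hSLQ i i le_rfl, hSLQ j j le_rfl]
      · have hcomm : Commute (Complex.log μ • (1 : Matrix (Fin n) (Fin n) ℂ)) Q :=
          (Commute.one_left Q).smul_left _
        have h1N : (1 : Matrix (Fin n) (Fin n) ℂ) + N = μ⁻¹ • B := by rw [hNdef]; abel
        rw [Matrix.exp_add_of_commute _ _ hcomm, ExpTriAux.exp_smul_one,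
          ExpTriAux.exp_aeval_Lp hNn, Complex.exp_log hμ0, smul_mul_assoc, one_mul, h1N,
          smul_smul, mul_inv_cancel₀ hμ0, one_smul]
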